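/- arXiv:2310.13443 — 2 statements merged into one kernel-verified Lean document; each statement's English description precedes it below -/
import Mathlib

section
/- Let $R = \prod_{i \in I} R_i$ be an arbitrary product of discrete valuation rings. Then every invertible $R$-module is free of rank one; i.e., the Picard group of $R$ is trivial. -/
open scoped TensorProduct


/-- From an isomorphism `M ⊗ N ≃ R`, the module `M` admits a finite split embedding into a
finite free module, i.e. it is finitely generated projective, in explicit split form. -/
theorem exists_comp_eq_id' {R : Type*} [CommRing R] {M N : Type*} [AddCommGroup M] [Module R M]
    [AddCommGroup N] [Module R N] (e : (M ⊗[R] N) ≃ₗ[R] R) :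
    ∃ (k : ℕ) (s : M →ₗ[R] (Fin k → R)) (π : (Fin k → R) →ₗ[R] M), ∀ m, π (s m) = m := by
  classical
  obtain ⟨S, hS⟩ := TensorProduct.exists_finset (e.symm 1)
  set E : M → N → R := fun a n => e (a ⊗ₜ n) with hE
  have Eadd₁ : ∀ (a a' : M) (n : N), E (a + a') n = E a n + E a' n := by
    intro a a' n; simp [hE, TensorProduct.add_tmul]
  have Esmul₁ : ∀ (c : R) (a : M) (n : N), E (c • a) n = c * E a n := by
    intro c a n; rw [hE]; dsimp only; rw [← TensorProduct.smul_tmul', map_smul, smul_eq_mul]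
  have Eadd₂ : ∀ (a : M) (n n' : N), E a (n + n') = E a n + E a n' := by
    intro a n n'; simp [hE, TensorProduct.tmul_add]
  have Esmul₂ : ∀ (c : R) (a : M) (n : N), E a (c • n) = c * E a n := by
    intro c a n
    rw [hE]
    simp only [← TensorProduct.smul_tmul, ← TensorProduct.smul_tmul']
    simp [smul_eq_mul]
  have h1 : ∑ p ∈ S, E p.1 p.2 = 1 := by
    have h := e.apply_symm_apply 1
    rw [hS] at h
    simpa [hE, map_sum] using h
  have R1 : ∀ (a : M) (n : N), a ⊗ₜ[R] n = ∑ p ∈ S, E a n • (p.1 ⊗ₜ[R] p.2) := by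
    intro a n
    have h₂ : a ⊗ₜ[R] n = e.symm (E a n) := by rw [hE]; simp
    calc a ⊗ₜ[R] n = e.symm (E a n • (1 : R)) := by rw [h₂]; simp
      _ = E a n • e.symm 1 := by rw [map_smul]
      _ = ∑ p ∈ S, E a n • (p.1 ⊗ₜ[R] p.2) := by rw [hS, Finset.smul_sum]
  have D : ∀ (a b : M) (n n'' : N),
      E a n'' * E b n = E a n * ∑ p ∈ S, E p.1 n'' * E b p.2 := by
    intro a b n n''
    set Φ : M ⊗[R] N →ₗ[R] R := TensorProduct.lift
      (LinearMap.mk₂ R (fun x y => E x n'' * E b y)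
        (fun x x' y => by rw [Eadd₁]; ring)
        (fun c x y => by rw [Esmul₁, smul_eq_mul]; ring)
        (fun x y y' => by rw [Eadd₂]; ring)
        (fun c x y => by rw [Esmul₂, smul_eq_mul]; ring)) with hΦdef
    have hΦ : ∀ (x : M) (y : N), Φ (x ⊗ₜ y) = E x n'' * E b y := by
      intro x y; rw [hΦdef]; simp [TensorProduct.lift.tmul]
    have h := congrArg Φ (R1 a n)
    rw [hΦ, map_sum] at h
    simp only [map_smul, hΦ, smul_eq_mul] at h
    rw [h, Finset.mul_sum]
  set u : R := ∑ p ∈ S, ∑ q ∈ S, E p.1 q.2 * E q.1 p.2 with hu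
  have hSb : ∀ (b : M) (n'' : N), ∑ p ∈ S, E p.1 n'' * E b p.2 = E b n'' * u := by
    intro b n''
    have step : ∀ p ∈ S, E p.1 n'' * E b p.2
        = E b n'' * ∑ q ∈ S, E q.1 p.2 * E p.1 q.2 := by
      intro p _
      have hD := D b p.1 n'' p.2
      rw [mul_comm (E p.1 n'') (E b p.2)]
      exact hD
    rw [Finset.sum_congr rfl step, ← Finset.mul_sum]
    congr 1
    rw [Finset.sum_comm]
  have C' : ∀ (a b : M) (n n'' : N), E a n'' * E b n = E a n * (E b n'' * u) := by
    intro a b n n''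
    rw [D a b n n'', hSb b n'']
  have huu : u * u = 1 := by
    have expand : ∀ p ∈ S, ∀ q ∈ S,
        E p.1 p.2 * E q.1 q.2 = E p.1 q.2 * (E q.1 p.2 * u) := fun p _ q _ => C' p.1 q.1 q.2 p.2
    have h₁ : (1 : R) = ∑ p ∈ S, ∑ q ∈ S, E p.1 p.2 * E q.1 q.2 := by
      rw [← Finset.sum_mul_sum, h1, one_mul]
    have h₂ : ∑ p ∈ S, ∑ q ∈ S, E p.1 p.2 * E q.1 q.2
        = (∑ p ∈ S, ∑ q ∈ S, E p.1 q.2 * E q.1 p.2) * u := by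
      rw [Finset.sum_mul]
      refine Finset.sum_congr rfl fun p hp => ?_
      rw [Finset.sum_mul]
      refine Finset.sum_congr rfl fun q hq => ?_
      rw [expand p hp q hq]; ring
    rw [h₂, ← hu] at h₁
    exact h₁.symm
  have key : ∀ m : M, ∑ p ∈ S, (u * E m p.2) • p.1 = m := by
    intro m
    set y : M := (∑ p ∈ S, (u * E m p.2) • p.1) - m with hy
    have hy0 : ∀ n : N, (y ⊗ₜ[R] n : M ⊗[R] N) = 0 := by
      intro n
      have hEy : e (y ⊗ₜ[R] n) = 0 := by
        have expand : (y ⊗ₜ[R] n : M ⊗[R] N)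
            = (∑ p ∈ S, (u * E m p.2) • (p.1 ⊗ₜ[R] n)) - m ⊗ₜ[R] n := by
          rw [hy, TensorProduct.sub_tmul, TensorProduct.sum_tmul]
          simp [TensorProduct.smul_tmul']
        rw [expand, map_sub, map_sum]
        simp only [map_smul, smul_eq_mul]
        have term : ∀ p ∈ S, (u * E m p.2) * E p.1 n = (u * u) * (E m n * E p.1 p.2) := by
          intro p _
          rw [mul_assoc, C' m p.1 n p.2]; ring
        rw [Finset.sum_congr rfl term, ← Finset.mul_sum, ← Finset.mul_sum, huu, h1]
        simp [hE]
      have := e.map_eq_zero_iff.mp hEy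
      exact this
    set Θ : M ≃ₗ[R] M ⊗[R] (M ⊗[R] N) :=
      (TensorProduct.lid R M).symm ≪≫ₗ
      (TensorProduct.congr (e.symm : R ≃ₗ[R] M ⊗[R] N) (LinearEquiv.refl R M)) ≪≫ₗ
      (TensorProduct.assoc R M N M) ≪≫ₗ
      (TensorProduct.congr (LinearEquiv.refl R M) (TensorProduct.comm R N M)) with hΘ
    have hΘy : Θ y = ∑ p ∈ S, p.1 ⊗ₜ[R] (y ⊗ₜ[R] p.2) := by
      rw [hΘ]
      simp only [LinearEquiv.trans_apply, TensorProduct.lid_symm_apply,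
        TensorProduct.congr_tmul, LinearEquiv.refl_apply, hS]
      rw [TensorProduct.sum_tmul, map_sum, map_sum]
      exact Finset.sum_congr rfl fun p _ => by
        simp [TensorProduct.assoc_tmul, TensorProduct.congr_tmul, TensorProduct.comm_tmul]
    have hΘy0 : Θ y = 0 := by
      rw [hΘy]
      exact Finset.sum_eq_zero fun p _ => by rw [hy0 p.2, TensorProduct.tmul_zero]
    have hy0' : y = 0 := Θ.map_eq_zero_iff.mp hΘy0
    have := sub_eq_zero.mp hy0'
    exact this
  -- Build the maps
  refine ⟨S.card,
    { toFun := fun m => fun j => u * E m ((S.equivFin.symm j : M × N)).2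
      map_add' := by
        intro a b; funext j
        simp only [Eadd₁, Pi.add_apply]
        ring
      map_smul' := by
        intro c a; funext j
        simp only [Esmul₁, RingHom.id_apply, Pi.smul_apply, smul_eq_mul]
        ring },
    ∑ j : Fin S.card, LinearMap.smulRight (LinearMap.proj j) ((S.equivFin.symm j : M × N)).1,
    ?_⟩
  intro m
  simp only [LinearMap.coe_sum, LinearMap.coe_mk, AddHom.coe_mk, Finset.sum_apply,
    LinearMap.smulRight_apply, LinearMap.proj_apply]
  have reindex := Equiv.sum_comp S.equivFin.symm
    (fun x : {x // x ∈ S} => (u * E m (x : M × N).2) • (x : M × N).1)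
  rw [reindex]
  rw [Finset.sum_coe_sort S (fun p => (u * E m p.2) • p.1)]
  exact key m



section Componentwise

variable {I : Type*} (R : I → Type*) [∀ i, CommRing (R i)] [DecidableEq I] {n : ℕ}

def atI (i : I) (x : Fin n → ∀ j, R j) : Fin n → R i := fun k => x k i

def liftI (i : I) (x : Fin n → R i) : Fin n → ∀ j, R j := fun k => Pi.single i (x k)

lemma atI_liftI (i : I) (x : Fin n → R i) : atI R i (liftI R i x) = x := by
  funext k; simp [atI, liftI]

lemma liftI_add (i : I) (x y : Fin n → R i) :
    liftI R i (x + y) = liftI R i x + liftI R i y := by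
  funext k; simp [liftI, Pi.single_add]

lemma liftI_smul (i : I) (c : R i) (x : Fin n → R i) :
    liftI R i (c • x) = (Pi.single i c : ∀ j, R j) • liftI R i x := by
  funext k
  show Pi.single i (c * x k) = (Pi.single i c : ∀ j, R j) • Pi.single i (x k)
  rw [smul_eq_mul, ← Pi.single_mul]

lemma liftI_atI_eq_smul (i : I) (y : Fin n → ∀ j, R j) :
    liftI R i (atI R i y) = (Pi.single i 1 : ∀ j, R j) • y := by
  funext k
  show Pi.single i (y k i) = (Pi.single i 1 : ∀ j, R j) • y k
  funext j
  rw [Pi.smul_apply', smul_eq_mul]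
  rcases eq_or_ne j i with h | h
  · subst h; rw [Pi.single_eq_same, Pi.single_eq_same, one_mul]
  · rw [Pi.single_eq_of_ne h, Pi.single_eq_of_ne h, zero_mul]

variable (p : (Fin n → ∀ j, R j) →ₗ[∀ j, R j] (Fin n → ∀ j, R j))

lemma atI_p_single (i : I) (x : Fin n → ∀ j, R j) :
    atI R i (p x) = atI R i (p (liftI R i (atI R i x))) := by
  set d : Fin n → ∀ j, R j := x - liftI R i (atI R i x) with hd
  have hdi : ∀ k, d k i = 0 := by
    intro k
    show x k i - (Pi.single i (x k i) : ∀ j, R j) i = 0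
    rw [Pi.single_eq_same, sub_self]
  have hsm : ((1 : ∀ j, R j) - Pi.single i 1) • d = d := by
    funext k j
    rw [Pi.smul_apply, Pi.smul_apply', smul_eq_mul]
    rcases eq_or_ne j i with h | h
    · subst h; rw [hdi k, mul_zero]
    · rw [Pi.sub_apply, Pi.single_eq_of_ne h, sub_zero, Pi.one_apply, one_mul]
  have hpd : ∀ k, (p d) k i = 0 := by
    intro k
    have h : p d = ((1 : ∀ j, R j) - Pi.single i 1) • p d := by
      conv_lhs => rw [← hsm, map_smul]
    have h2 := congrFun (congrFun h k) i
    rw [Pi.smul_apply, Pi.smul_apply', smul_eq_mul, Pi.sub_apply, Pi.single_eq_same,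
      Pi.one_apply, sub_self, zero_mul] at h2
    exact h2
  have hsum : p x = p (liftI R i (atI R i x)) + p d := by
    rw [← map_add]
    congr 1
    rw [hd]; abel
  funext k
  show (p x) k i = (p (liftI R i (atI R i x))) k i
  rw [hsum]
  show (p (liftI R i (atI R i x))) k i + (p d) k i = _
  rw [hpd k, add_zero]

def pI (i : I) : (Fin n → R i) →ₗ[R i] (Fin n → R i) where
  toFun x := atI R i (p (liftI R i x))
  map_add' x y := by
    rw [liftI_add, map_add]; rfl
  map_smul' c x := by
    rw [liftI_smul, map_smul]
    funext k
    show ((Pi.single i c : ∀ j, R j) • p (liftI R i x)) k i = (c • atI R i (p (liftI R i x))) k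
    rw [Pi.smul_apply, Pi.smul_apply', smul_eq_mul, Pi.single_eq_same]
    rfl

lemma pI_apply (i : I) (x : Fin n → R i) :
    pI R p i x = atI R i (p (liftI R i x)) := rfl

lemma pI_atI (i : I) (y : Fin n → ∀ j, R j) :
    pI R p i (atI R i y) = atI R i (p y) := by
  rw [pI_apply]
  exact (atI_p_single R p i y).symm

lemma pI_idem (hp : ∀ x, p (p x) = p x) (i : I) (x : Fin n → R i) :
    pI R p i (pI R p i x) = pI R p i x := by
  rw [pI_apply R p i x, pI_atI, hp]

end Componentwise

lemma Q_equiv_rank_one {I : Type*} (R : I → Type*) [∀ i, CommRing (R i)] [∀ i, IsDomain (R i)]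
    [∀ i, IsDiscreteValuationRing (R i)] [DecidableEq I]
    {M N : Type*} [AddCommGroup M] [Module (∀ i, R i) M] [AddCommGroup N] [Module (∀ i, R i) N]
    (e : (M ⊗[∀ i, R i] N) ≃ₗ[∀ i, R i] (∀ i, R i))
    {n : ℕ} (s : M →ₗ[∀ i, R i] (Fin n → ∀ i, R i)) (π : (Fin n → ∀ i, R i) →ₗ[∀ i, R i] M)
    (hsπ : ∀ m, π (s m) = m) (i : I) :
    Nonempty (↥(LinearMap.eqLocus (pI R (s ∘ₗ π) i) LinearMap.id) ≃ₗ[R i] R i) := by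
  classical
  letI : Algebra (∀ j, R j) (R i) := (Pi.evalRingHom R i).toAlgebra
  have halg : ∀ r : ∀ j, R j, algebraMap (∀ j, R j) (R i) r = r i := fun _ => rfl
  set p : (Fin n → ∀ j, R j) →ₗ[∀ j, R j] (Fin n → ∀ j, R j) := s ∘ₗ π with hpdef
  have hps : ∀ m, p (s m) = s m := by
    intro m; show s (π (s m)) = s m; rw [hsπ]
  set Q : Submodule (R i) (Fin n → R i) := LinearMap.eqLocus (pI R p i) LinearMap.id with hQdef
  letI : Module (∀ j, R j) ↥Q := Module.compHom _ (algebraMap (∀ j, R j) (R i))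
  letI : IsScalarTower (∀ j, R j) (R i) ↥Q := ⟨fun r a x => mul_smul (algebraMap _ (R i) r) a x⟩
  have memQ : ∀ m : M, atI R i (s m) ∈ Q := by
    intro m
    rw [hQdef, LinearMap.mem_eqLocus]
    show pI R p i (atI R i (s m)) = atI R i (s m)
    rw [pI_atI, hps]
  have hsmulQ : ∀ (r : ∀ j, R j) (x : ↥Q), r • x = (r i) • x := fun r x => rfl
  set qL : M →ₗ[∀ j, R j] ↥Q :=
    { toFun := fun m => ⟨atI R i (s m), memQ m⟩
      map_add' := by
        intro m m'; apply Subtype.ext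
        show atI R i (s (m + m')) = atI R i (s m) + atI R i (s m')
        rw [map_add]; rfl
      map_smul' := by
        intro r m; apply Subtype.ext
        show atI R i (s (r • m)) = (r i) • atI R i (s m)
        rw [map_smul]
        rfl } with hqL
  set χ : ↥Q →ₗ[R i] ((R i) ⊗[∀ j, R j] M) :=
    { toFun := fun x => (1 : R i) ⊗ₜ[∀ j, R j] (π (liftI R i (x : Fin n → R i)))
      map_add' := by
        intro x y
        show (1 : R i) ⊗ₜ[∀ j, R j] (π (liftI R i ((x : Fin n → R i) + y))) = _
        rw [liftI_add, map_add, TensorProduct.tmul_add]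
      map_smul' := by
        intro c x
        show (1 : R i) ⊗ₜ[∀ j, R j] (π (liftI R i (c • (x : Fin n → R i))))
          = c • ((1 : R i) ⊗ₜ[∀ j, R j] (π (liftI R i (x : Fin n → R i))))
        rw [liftI_smul, map_smul, TensorProduct.tmul_smul]
        rw [← algebraMap_smul (R i) (Pi.single i c : ∀ j, R j)
          ((1 : R i) ⊗ₜ[∀ j, R j] (π (liftI R i (x : Fin n → R i)))), halg, Pi.single_eq_same]
      } with hχ
  set ψ : ((R i) ⊗[∀ j, R j] M) →ₗ[R i] ↥Q := LinearMap.liftBaseChange (R i) qL with hψ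
  have h1 : ∀ x : ↥Q, ψ (χ x) = x := by
    intro x
    rw [hχ, hψ]
    show LinearMap.liftBaseChange (R i) qL
      ((1 : R i) ⊗ₜ[∀ j, R j] (π (liftI R i (x : Fin n → R i)))) = x
    rw [LinearMap.liftBaseChange_tmul, one_smul]
    apply Subtype.ext
    show atI R i (s (π (liftI R i (x : Fin n → R i)))) = (x : Fin n → R i)
    have h2 : atI R i (p (liftI R i (x : Fin n → R i))) = (x : Fin n → R i) := by
      rw [← pI_apply]
      exact x.2
    exact h2
  have h2 : ∀ z : (R i) ⊗[∀ j, R j] M, χ (ψ z) = z := by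
    intro z
    induction z using TensorProduct.induction_on with
    | zero => rw [map_zero, map_zero]
    | tmul a m =>
      rw [hψ]
      show χ (LinearMap.liftBaseChange (R i) qL (a ⊗ₜ[∀ j, R j] m)) = a ⊗ₜ[∀ j, R j] m
      rw [LinearMap.liftBaseChange_tmul, map_smul]
      have hval : χ (qL m) = (1 : R i) ⊗ₜ[∀ j, R j] (π (liftI R i (atI R i (s m)))) := rfl
      rw [hval, liftI_atI_eq_smul, map_smul, hsπ, TensorProduct.tmul_smul,
        ← algebraMap_smul (R i) (Pi.single i (1 : R i) : ∀ j, R j)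
          ((1 : R i) ⊗ₜ[∀ j, R j] m), halg, Pi.single_eq_same, one_smul,
        TensorProduct.smul_tmul', smul_eq_mul, mul_one]
    | add z₁ z₂ ih₁ ih₂ => rw [map_add, map_add, ih₁, ih₂]
  have E1 : ((R i) ⊗[∀ j, R j] M) ≃ₗ[R i] ↥Q :=
    LinearEquiv.ofLinear ψ χ (LinearMap.ext h1) (LinearMap.ext h2)
  -- instances
  haveI : Module.Finite (∀ j, R j) M :=
    Module.Finite.of_surjective π (fun m => ⟨s m, hsπ m⟩)
  haveI : Module.Projective (∀ j, R j) M := Module.Projective.of_split s π (LinearMap.ext hsπ)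
  obtain ⟨n₂, s₂, π₂, hsπ₂⟩ := exists_comp_eq_id' ((TensorProduct.comm (∀ j, R j) N M) ≪≫ₗ e)
  haveI : Module.Finite (∀ j, R j) N :=
    Module.Finite.of_surjective π₂ (fun m => ⟨s₂ m, hsπ₂ m⟩)
  haveI : Module.Projective (∀ j, R j) N := Module.Projective.of_split s₂ π₂ (LinearMap.ext hsπ₂)
  haveI : Module.Projective (R i) ((R i) ⊗[∀ j, R j] M) := inferInstance
  haveI : Module.Projective (R i) ((R i) ⊗[∀ j, R j] N) := inferInstance
  haveI : Module.Finite (R i) ((R i) ⊗[∀ j, R j] M) := inferInstance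
  haveI : Module.Finite (R i) ((R i) ⊗[∀ j, R j] N) := inferInstance
  haveI := Module.finitePresentation_of_projective (R i) ((R i) ⊗[∀ j, R j] M)
  haveI := Module.finitePresentation_of_projective (R i) ((R i) ⊗[∀ j, R j] N)
  haveI : Module.Free (R i) ((R i) ⊗[∀ j, R j] M) := Module.free_of_flat_of_isLocalRing
  haveI : Module.Free (R i) ((R i) ⊗[∀ j, R j] N) := Module.free_of_flat_of_isLocalRing
  -- rank computation
  have bigE : (((R i) ⊗[∀ j, R j] M) ⊗[R i] ((R i) ⊗[∀ j, R j] N)) ≃ₗ[R i] R i :=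
    (TensorProduct.AlgebraTensorModule.distribBaseChange (∀ j, R j) (R i) M N).symm ≪≫ₗ
      (LinearEquiv.baseChange (∀ j, R j) (R i) (M ⊗[∀ j, R j] N) (∀ j, R j) e) ≪≫ₗ
      (Algebra.TensorProduct.rid (∀ j, R j) (R i) (R i)).toLinearEquiv
  have h1rank : Module.finrank (R i)
      (((R i) ⊗[∀ j, R j] M) ⊗[R i] ((R i) ⊗[∀ j, R j] N)) = 1 := by
    rw [bigE.finrank_eq, Module.finrank_self]
  rw [Module.finrank_tensorProduct] at h1rank
  have hM1 : Module.finrank (R i) ((R i) ⊗[∀ j, R j] M) = 1 := Nat.eq_one_of_mul_eq_one_right h1rank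
  have hcard : Fintype.card (Module.Free.ChooseBasisIndex (R i) ((R i) ⊗[∀ j, R j] M)) = 1 := by
    rw [← Module.finrank_eq_card_chooseBasisIndex]; exact hM1
  let eb : Module.Free.ChooseBasisIndex (R i) ((R i) ⊗[∀ j, R j] M) ≃ Fin 1 :=
    Fintype.equivFinOfCardEq hcard
  exact ⟨E1.symm ≪≫ₗ (((Module.Free.chooseBasis (R i) ((R i) ⊗[∀ j, R j] M)).reindex eb).equivFun
    ≪≫ₗ LinearEquiv.funUnique (Fin 1) (R i) (R i))⟩

/-- for an arbitrary product `R = ∏ᵢ Rᵢ` of discrete valuation rings,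
every invertible `R`-module is free of rank one, i.e. `Pic(R)` is trivial. -/
theorem stmt11 (I : Type*) (R : I → Type*) [∀ i, CommRing (R i)] [∀ i, IsDomain (R i)]
    [∀ i, IsDiscreteValuationRing (R i)]
    (M : Type*) [AddCommGroup M] [Module (∀ i, R i) M]
    (N : Type*) [AddCommGroup N] [Module (∀ i, R i) N]
    (e : (M ⊗[∀ i, R i] N) ≃ₗ[∀ i, R i] (∀ i, R i)) :
    Nonempty (M ≃ₗ[∀ i, R i] (∀ i, R i)) := by
  classical
  obtain ⟨n, s, π, hsπ⟩ := exists_comp_eq_id' e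
  have hps : ∀ m, (s ∘ₗ π) (s m) = s m := by
    intro m; show s (π (s m)) = s m; rw [hsπ]
  let w : ∀ i, ↥(LinearMap.eqLocus (pI R (s ∘ₗ π) i) LinearMap.id) ≃ₗ[R i] R i :=
    fun i => (Q_equiv_rank_one R e s π hsπ i).some
  have memQ : ∀ (i : I) (m : M),
      atI R i (s m) ∈ LinearMap.eqLocus (pI R (s ∘ₗ π) i) LinearMap.id := by
    intro i m
    rw [LinearMap.mem_eqLocus]
    show pI R (s ∘ₗ π) i (atI R i (s m)) = atI R i (s m)
    rw [pI_atI, hps]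
  let G : M →ₗ[∀ i, R i] (∀ i, R i) :=
    { toFun := fun m => fun i => w i ⟨atI R i (s m), memQ i m⟩
      map_add' := by
        intro m m'
        funext i
        show w i ⟨atI R i (s (m + m')), memQ i (m + m')⟩
          = w i ⟨atI R i (s m), memQ i m⟩ + w i ⟨atI R i (s m'), memQ i m'⟩
        rw [← map_add]
        congr 1
        apply Subtype.ext
        show atI R i (s (m + m')) = atI R i (s m) + atI R i (s m')
        rw [map_add]; rfl
      map_smul' := by
        intro r m
        funext i
        have harg : (⟨atI R i (s (r • m)), memQ i (r • m)⟩
            : ↥(LinearMap.eqLocus (pI R (s ∘ₗ π) i) LinearMap.id))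
            = (r i) • ⟨atI R i (s m), memQ i m⟩ := by
          apply Subtype.ext
          show atI R i (s (r • m)) = (r i) • atI R i (s m)
          rw [map_smul]; rfl
        show w i ⟨atI R i (s (r • m)), memQ i (r • m)⟩
          = (r • fun i => w i ⟨atI R i (s m), memQ i m⟩) i
        rw [harg, map_smul]
        rfl }
  have hGbij : Function.Bijective G := by
    constructor
    · intro m m' h
      have h2 : ∀ i, (⟨atI R i (s m), memQ i m⟩
          : ↥(LinearMap.eqLocus (pI R (s ∘ₗ π) i) LinearMap.id))
          = ⟨atI R i (s m'), memQ i m'⟩ := by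
        intro i
        apply (w i).injective
        exact congrFun h i
      have h3 : s m = s m' := by
        funext k j
        have h4 : atI R j (s m) = atI R j (s m') := congrArg Subtype.val (h2 j)
        exact congrFun h4 k
      rw [← hsπ m, ← hsπ m', h3]
    · intro f
      let x : ∀ i, ↥(LinearMap.eqLocus (pI R (s ∘ₗ π) i) LinearMap.id) :=
        fun i => (w i).symm (f i)
      let y : Fin n → ∀ j, R j := fun k j => (x j : Fin n → R j) k
      have hy : (s ∘ₗ π) y = y := by
        funext k j
        have h1 : atI R j ((s ∘ₗ π) y) = pI R (s ∘ₗ π) j (atI R j y) := (pI_atI R _ j y).symm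
        have h2 : atI R j y = (x j : Fin n → R j) := rfl
        have h3 : pI R (s ∘ₗ π) j ((x j : Fin n → R j)) = (x j : Fin n → R j) := (x j).2
        have h4 : atI R j ((s ∘ₗ π) y) = (x j : Fin n → R j) := by rw [h1, h2, h3]
        exact congrFun h4 k
      refine ⟨π y, ?_⟩
      funext i
      show w i ⟨atI R i (s (π y)), memQ i (π y)⟩ = f i
      have h5 : (⟨atI R i (s (π y)), memQ i (π y)⟩
          : ↥(LinearMap.eqLocus (pI R (s ∘ₗ π) i) LinearMap.id)) = x i := by
        apply Subtype.ext
        show atI R i (s (π y)) = (x i : Fin n → R i)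
        have : s (π y) = y := hy
        rw [this]
        rfl
      rw [h5]
      exact (w i).apply_symm_apply (f i)
  exact ⟨LinearEquiv.ofBijective G hGbij⟩
end

section
/- Let $X$ be the set of closed points of a smooth projective irreducible curve over an algebraically closed field, and let $\mathbb{A}_X = \prod'_{x}(K_x, A_x)$ be the restricted product of the completed local fields $K_x$ with respect to their valuation rings $A_x$. Then the set of maximal ideals $\{I_x = \ker(\mathbb{A}_X \to K_x) : x \in X\}$ is dense in $\mathrm{Spec}(\mathbb{A}_X)$ with the Zariski topology. -/
/-- The geometric adele ring of a family of Laurent series fields indexed by the closed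
points: the subring of `∏ₓ k((z))` of families whose component lies in `k[[z]]` for all
but finitely many `x`. (Over an algebraically closed field every completed local field of
the curve is isomorphic to `k((z))`.) -/
noncomputable def adeleSubring (k : Type*) [Field k] (X : Type*) : Subring (X → LaurentSeries k) where
  carrier := {f | {x : X | f x ∉ (HahnSeries.ofPowerSeries ℤ k).range}.Finite}
  zero_mem' := by
    apply Set.Finite.subset Set.finite_empty
    intro x hx
    exact absurd (Subring.zero_mem _) hx
  one_mem' := by
    apply Set.Finite.subset Set.finite_empty
    intro x hx
    exact absurd (Subring.one_mem _) hx
  add_mem' := by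
    intro f g hf hg
    apply Set.Finite.subset (hf.union hg)
    intro x hx
    by_contra hc
    simp only [Set.mem_union, Set.mem_setOf_eq, not_or, not_not] at hc
    exact hx (Subring.add_mem _ hc.1 hc.2)
  mul_mem' := by
    intro f g hf hg
    apply Set.Finite.subset (hf.union hg)
    intro x hx
    by_contra hc
    simp only [Set.mem_union, Set.mem_setOf_eq, not_or, not_not] at hc
    exact hx (Subring.mul_mem _ hc.1 hc.2)
  neg_mem' := by
    intro f hf
    apply Set.Finite.subset hf
    intro x hx
    by_contra hc
    simp only [Set.mem_setOf_eq, not_not] at hc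
    exact hx (Subring.neg_mem _ hc)

/-- Evaluation of an adele at the closed point `x`, with values in the completed local
field `K_x = k((z))`. -/
noncomputable def adeleEval (k : Type*) [Field k] (X : Type*) (x : X) :
    adeleSubring k X →+* LaurentSeries k :=
  (Pi.evalRingHom (fun _ : X => LaurentSeries k) x).comp (Subring.subtype _)

/-- the set of maximal ideals `Iₓ = ker(𝔸_X → K_x)`, for `x` a closed
point, is dense in `Spec(𝔸_X)` with the Zariski topology. -/
theorem stmt12 (k : Type*) [Field k] [IsAlgClosed k] (X : Type*) :
    Dense {P : PrimeSpectrum (adeleSubring k X) |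
      ∃ x : X, P.asIdeal = RingHom.ker (adeleEval k X x)} := by
  rw [(PrimeSpectrum.isTopologicalBasis_basic_opens (R := adeleSubring k X)).dense_iff]
  rintro o ⟨f, rfl⟩ ho
  obtain ⟨P, hP⟩ := ho
  have hf : f ≠ 0 := by
    rintro rfl
    simp [PrimeSpectrum.basicOpen_zero] at hP
  obtain ⟨x, hx⟩ : ∃ x, (f : X → LaurentSeries k) x ≠ 0 := by
    by_contra h
    push_neg at h
    exact hf (Subtype.ext (funext h))
  have hprime : (RingHom.ker (adeleEval k X x)).IsPrime := RingHom.ker_isPrime _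
  refine ⟨⟨RingHom.ker (adeleEval k X x), hprime⟩, ?_, ⟨x, rfl⟩⟩
  exact (by simpa [PrimeSpectrum.basicOpen, RingHom.mem_ker, adeleEval] using hx : f ∉ RingHom.ker (adeleEval k X x))
end
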